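/- Let r be a positive integer and let f : ℕ+ → ℂ be an r-even function. Then for every positive integer n, f(n) = Σ_{q | r} h(q) c(n,q), where for each positive divisor q of r the coefficient is h(q) = (1/(r φ(q))) Σ_{e | r} φ(e) f(r/e) c(r/e, q). -/

import Mathlib

open Finset

/-- The Ramanujan sum `c(n,r) = ∑_{1 ≤ k ≤ r, gcd(k,r)=1} exp(2πikn/r)`. -/
noncomputable def ramanujanSum (n r : ℕ) : ℂ :=
  ∑ k ∈ (Finset.Icc 1 r).filter (fun k => Nat.gcd k r = 1),
    Complex.exp (2 * Real.pi * Complex.I * k * n / r)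

noncomputable def rse (x : ℂ) : ℂ := Complex.exp (2 * Real.pi * Complex.I * x)

lemma two_pi_I_ne_zero : (2 * Real.pi * Complex.I : ℂ) ≠ 0 :=
  mul_ne_zero (mul_ne_zero two_ne_zero (Complex.ofReal_ne_zero.mpr Real.pi_ne_zero))
    Complex.I_ne_zero

lemma rse_add (x y : ℂ) : rse (x + y) = rse x * rse y := by
  rw [rse, rse, rse, ← Complex.exp_add]; ring_nf

lemma rse_int (n : ℤ) : rse n = 1 := by
  rw [rse, Complex.exp_eq_one_iff]; exact ⟨n, by ring⟩

lemma rse_eq_one_iff (x : ℂ) : rse x = 1 ↔ ∃ n : ℤ, x = n := by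
  rw [rse, Complex.exp_eq_one_iff]
  constructor
  · rintro ⟨n, h⟩
    refine ⟨n, ?_⟩
    have h' : (2 * Real.pi * Complex.I : ℂ) * x = (2 * Real.pi * Complex.I) * n := by
      linear_combination h
    exact mul_left_cancel₀ two_pi_I_ne_zero h'
  · rintro ⟨n, rfl⟩; exact ⟨n, by ring⟩

lemma rse_pow (x : ℂ) (k : ℕ) : (rse x) ^ k = rse (k * x) := by
  rw [rse, rse, ← Complex.exp_nat_mul]; ring_nf

lemma ramanujanSum_def' (n q : ℕ) :
    ramanujanSum n q =
    ∑ k ∈ (Finset.Icc 1 q).filter (fun k => Nat.gcd k q = 1), rse (k * n / q) := by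
  refine Finset.sum_congr rfl fun k _ => ?_
  rw [rse]; ring_nf

lemma geom_icc (z : ℂ) (m : ℕ) (hz : z ^ m = 1) :
    ∑ a ∈ Finset.Icc 1 m, z ^ a = if z = 1 then (m : ℂ) else 0 := by
  by_cases h1 : z = 1
  · simp [h1]
  · simp only [h1, if_false]
    have e1 : ∑ a ∈ Finset.Icc 1 m, z ^ a = z * ∑ a ∈ Finset.range m, z ^ a := by
      rw [show Finset.Icc 1 m = Finset.Ico 1 (m+1) by rfl, Finset.sum_Ico_eq_sum_range,
        Finset.mul_sum]
      simp only [add_tsub_cancel_right]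
      exact Finset.sum_congr rfl fun i _ => by rw [pow_add, pow_one, mul_comm]
    rw [e1, geom_sum_eq h1, hz]
    simp

/-- Partition of `[1,q]` according to `gcd k q = d`. -/
lemma part_sum (q : ℕ) (hq : 0 < q) (G : ℕ → ℂ) :
    ∑ k ∈ Finset.Icc 1 q, G k =
    ∑ d ∈ q.divisors,
      ∑ j ∈ (Finset.Icc 1 (q / d)).filter (fun j => Nat.gcd j (q / d) = 1), G (j * d) := by
  have := (Finset.sum_sigma (q.divisors)
    (fun d => (Finset.Icc 1 (q / d)).filter (fun j => Nat.gcd j (q / d) = 1))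
    (fun x => G (x.2 * x.1)))
  rw [← this]
  refine Finset.sum_nbij' (fun k => (⟨Nat.gcd k q, k / Nat.gcd k q⟩ : Σ _ : ℕ, ℕ))
    (fun x => x.2 * x.1) ?_ ?_ ?_ ?_ ?_
  · intro k hk
    simp only [Finset.mem_Icc] at hk
    have hk0 : 0 < k := hk.1
    have hg : 0 < Nat.gcd k q := Nat.gcd_pos_of_pos_left q hk0
    simp only [Finset.mem_sigma, Nat.mem_divisors, Finset.mem_filter, Finset.mem_Icc]
    refine ⟨⟨Nat.gcd_dvd_right k q, hq.ne'⟩, ⟨Nat.one_le_div_iff hg |>.mpr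
      (Nat.le_of_dvd hk0 (Nat.gcd_dvd_left k q)), Nat.div_le_div_right hk.2⟩, ?_⟩
    exact Nat.coprime_div_gcd_div_gcd hg
  · rintro ⟨d, j⟩ hx
    simp only [Finset.mem_sigma, Nat.mem_divisors, Finset.mem_filter, Finset.mem_Icc] at hx
    obtain ⟨⟨hdq, -⟩, ⟨hj1, hj2⟩, -⟩ := hx
    have hd0 : 0 < d := Nat.pos_of_dvd_of_pos hdq hq
    simp only [Finset.mem_Icc]
    constructor
    · exact Nat.one_le_iff_ne_zero.mpr (by positivity)
    · calc j * d ≤ (q / d) * d := Nat.mul_le_mul_right d hj2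
        _ = q := Nat.div_mul_cancel hdq
  · intro k hk
    simp only [Finset.mem_Icc] at hk
    exact Nat.div_mul_cancel (Nat.gcd_dvd_left k q)
  · rintro ⟨d, j⟩ hx
    simp only [Finset.mem_sigma, Nat.mem_divisors, Finset.mem_filter, Finset.mem_Icc] at hx
    obtain ⟨⟨hdq, -⟩, ⟨hj1, hj2⟩, hcop⟩ := hx
    have hd0 : 0 < d := Nat.pos_of_dvd_of_pos hdq hq
    have hg : Nat.gcd (j * d) q = d := by
      conv_lhs => rw [← Nat.div_mul_cancel hdq]
      rw [mul_comm j d, mul_comm (q / d) d, Nat.gcd_mul_left, hcop, mul_one]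
    simp only [hg, Nat.mul_div_cancel _ hd0]
  · intro k hk
    simp only [Finset.mem_Icc] at hk
    simp only []
    rw [Nat.div_mul_cancel (Nat.gcd_dvd_left k q)]

lemma sum_icc_rse (n q : ℕ) (hq : 0 < q) :
    ∑ k ∈ Finset.Icc 1 q, rse (k * n / q) = if q ∣ n then (q : ℂ) else 0 := by
  have hq0 : (q : ℂ) ≠ 0 := Nat.cast_ne_zero.mpr hq.ne'
  have hterm : ∀ k : ℕ, rse ((k : ℂ) * n / q) = (rse ((n : ℂ) / q)) ^ k := by
    intro k; rw [rse_pow]; ring_nf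
  have hz : (rse ((n : ℂ) / q)) ^ q = 1 := by
    rw [rse_pow]
    have : (q : ℂ) * ((n : ℂ) / q) = ((n : ℤ) : ℂ) := by field_simp; exact (Int.cast_natCast n).symm
    rw [this, rse_int]
  rw [Finset.sum_congr rfl (fun k _ => hterm k), geom_icc _ _ hz]
  have : rse ((n : ℂ) / q) = 1 ↔ q ∣ n := by
    rw [rse_eq_one_iff]
    constructor
    · rintro ⟨m, hm⟩
      field_simp at hm
      have hnm : (n : ℤ) = m * q := by rw [mul_comm]; exact_mod_cast hm
      have : (q : ℤ) ∣ (n : ℤ) := ⟨m, by linarith⟩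
      exact_mod_cast this
    · rintro ⟨t, rfl⟩
      exact ⟨t, by push_cast; field_simp⟩
  rw [if_congr this rfl rfl]

lemma sum_ramanujan_divisors (n q : ℕ) (hq : 0 < q) :
    ∑ d ∈ q.divisors, ramanujanSum n d = if q ∣ n then (q : ℂ) else 0 := by
  rw [← Nat.sum_div_divisors q (fun d => ramanujanSum n d), ← sum_icc_rse n q hq,
    part_sum q hq (fun k => rse (k * n / q))]
  refine Finset.sum_congr rfl fun d hd => ?_
  rw [Nat.mem_divisors] at hd
  have hd0 : 0 < d := Nat.pos_of_dvd_of_pos hd.1 hq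
  rw [ramanujanSum_def']
  refine Finset.sum_congr rfl fun j hj => ?_
  congr 1
  have hcast : ((q / d : ℕ) : ℂ) = (q : ℂ) / d := by
    rw [Nat.cast_div hd.1 (Nat.cast_ne_zero.mpr hd0.ne')]
  rw [hcast]
  have hdc : (d : ℂ) ≠ 0 := Nat.cast_ne_zero.mpr hd0.ne'
  have hqc : (q : ℂ) ≠ 0 := Nat.cast_ne_zero.mpr hq.ne'
  push_cast
  field_simp

lemma ramanujan_formula (n q : ℕ) (hq : 0 < q) :
    ramanujanSum n q = ∑ x ∈ q.divisorsAntidiagonal,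
      (ArithmeticFunction.moebius x.1) • (if x.2 ∣ n then (x.2 : ℂ) else 0) :=
  (ArithmeticFunction.sum_eq_iff_sum_smul_moebius_eq.mp
    (fun m hm => sum_ramanujan_divisors n m hm) q hq).symm

lemma ramanujan_gcd (n q : ℕ) (hq : 0 < q) :
    ramanujanSum n q = ramanujanSum (Nat.gcd n q) q := by
  rw [ramanujan_formula n q hq, ramanujan_formula (Nat.gcd n q) q hq]
  refine Finset.sum_congr rfl fun x hx => ?_
  rw [Nat.mem_divisorsAntidiagonal] at hx
  have hdvd : x.2 ∣ q := Dvd.intro_left x.1 hx.1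
  congr 1
  have : x.2 ∣ n ↔ x.2 ∣ Nat.gcd n q := by
    rw [Nat.dvd_gcd_iff]
    exact ⟨fun h => ⟨h, hdvd⟩, fun h => h.1⟩
  rw [if_congr this rfl rfl]

lemma totient_card (q : ℕ) (hq : 0 < q) :
    ((Finset.Icc 1 q).filter (fun k => Nat.gcd k q = 1)).card = Nat.totient q := by
  rcases eq_or_lt_of_le (Nat.one_le_iff_ne_zero.mpr hq.ne') with hq1 | hq2
  · subst hq1
    decide
  · rw [Nat.totient]
    congr 1
    ext k
    simp only [Finset.mem_filter, Finset.mem_Icc, Finset.mem_range]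
    constructor
    · rintro ⟨⟨hk1, hk2⟩, hg⟩
      refine ⟨?_, by rwa [Nat.coprime_comm]⟩
      rcases lt_or_eq_of_le hk2 with h | rfl
      · exact h
      · rw [Nat.gcd_self] at hg
        omega
    · rintro ⟨hk, hg⟩
      rw [Nat.coprime_comm] at hg
      have hk0 : k ≠ 0 := by
        rintro rfl
        rw [Nat.coprime_zero_left] at hg
        omega
      exact ⟨⟨Nat.one_le_iff_ne_zero.mpr hk0, le_of_lt hk⟩, hg⟩

lemma unique_partner (q : ℕ) (hq : 0 < q) (k : ℕ)
    (hk : k ∈ (Finset.Icc 1 q).filter (fun k => Nat.gcd k q = 1)) :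
    (((Finset.Icc 1 q).filter (fun k => Nat.gcd k q = 1)).filter
      (fun k' => q ∣ k + k')).card = 1 := by
  simp only [Finset.mem_filter, Finset.mem_Icc] at hk
  obtain ⟨⟨hk1, hk2⟩, hg⟩ := hk
  rcases eq_or_lt_of_le (Nat.one_le_iff_ne_zero.mpr hq.ne') with hq1 | hq2
  · subst hq1
    rw [Finset.card_eq_one]
    refine ⟨1, ?_⟩
    ext k'
    simp only [Finset.mem_filter, Finset.mem_Icc, Finset.mem_singleton]
    constructor
    · rintro ⟨⟨⟨h1, h2⟩, -⟩, -⟩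
      omega
    · rintro rfl
      exact ⟨⟨⟨le_refl 1, le_refl 1⟩, by decide⟩, one_dvd _⟩
  · have hkq : k < q := by
      rcases lt_or_eq_of_le hk2 with h | rfl
      · exact h
      · rw [Nat.gcd_self] at hg; omega
    rw [Finset.card_eq_one]
    refine ⟨q - k, ?_⟩
    ext k'
    simp only [Finset.mem_filter, Finset.mem_Icc, Finset.mem_singleton]
    constructor
    · rintro ⟨⟨⟨h1, h2⟩, -⟩, hdvd⟩
      obtain ⟨t, ht⟩ := hdvd
      have ht2 : t < 2 := lt_of_mul_lt_mul_left (by omega : q * t < q * 2) (Nat.zero_le q)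
      have ht0 : 0 < t := by
        rcases Nat.eq_zero_or_pos t with rfl | h
        · omega
        · exact h
      have : t = 1 := by omega
      subst this
      omega
    · rintro rfl
      have hcop : Nat.gcd (q - k) q = 1 := by
        have h1 : q - (q - k) = k := by omega
        rw [← Nat.gcd_sub_self_right (Nat.sub_le q k), h1,
          Nat.gcd_sub_self_left (le_of_lt hkq), Nat.gcd_comm]
        exact hg
      exact ⟨⟨⟨by omega, by omega⟩, hcop⟩, ⟨1, by omega⟩⟩

lemma rse_nat (m : ℕ) : rse m = 1 := by
  rw [show ((m : ℕ) : ℂ) = ((m : ℤ) : ℂ) by push_cast; ring]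
  exact rse_int m

lemma cond_iff (q q' k k' : ℕ) (hq0 : 0 < q) (hq'0 : 0 < q')
    (hkq : Nat.gcd k q = 1) (hk'q' : Nat.gcd k' q' = 1) :
    rse ((k : ℂ)/q + (k' : ℂ)/q') = 1 ↔ (q = q' ∧ q ∣ (k + k')) := by
  have hqc : (q : ℂ) ≠ 0 := Nat.cast_ne_zero.mpr hq0.ne'
  have hq'c : (q' : ℂ) ≠ 0 := Nat.cast_ne_zero.mpr hq'0.ne'
  rw [rse_eq_one_iff]
  constructor
  · rintro ⟨m, hm⟩
    field_simp at hm
    -- hm should be an equation in ℂ between casts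
    have hZ : (k : ℤ) * q' + (k' : ℤ) * q = m * (q * q') := by
      have hm' : (k : ℤ) * q' + q * k' = (q * q') * m := by exact_mod_cast hm
      linear_combination hm'
    have h1 : (q : ℤ) ∣ (k : ℤ) * q' := ⟨m * q' - k', by linarith [hZ]⟩
    have h2 : (q' : ℤ) ∣ (k' : ℤ) * q := ⟨m * q - k, by linarith [hZ]⟩
    have h1n : q ∣ k * q' := by exact_mod_cast h1
    have h2n : q' ∣ k' * q := by exact_mod_cast h2
    have hqq' : q ∣ q' :=
      (Nat.Coprime.dvd_of_dvd_mul_left (Nat.Coprime.symm hkq) h1n)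
    have hq'q : q' ∣ q :=
      (Nat.Coprime.dvd_of_dvd_mul_left (Nat.Coprime.symm hk'q') h2n)
    have heq : q = q' := Nat.dvd_antisymm hqq' hq'q
    subst heq
    refine ⟨rfl, ?_⟩
    have h3 : ((k : ℤ) + k') * q = (m * q) * q := by linarith [hZ]
    have h4 : (k : ℤ) + k' = m * q := by
      have hqZ : (q : ℤ) ≠ 0 := by exact_mod_cast hq0.ne'
      exact mul_right_cancel₀ hqZ h3
    have : (q : ℤ) ∣ ((k + k' : ℕ) : ℤ) := ⟨m, by push_cast; linarith⟩
    exact_mod_cast this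
  · rintro ⟨rfl, t, ht⟩
    refine ⟨t, ?_⟩
    have : (k : ℂ) + k' = q * t := by exact_mod_cast congrArg (Nat.cast : ℕ → ℂ) ht
    field_simp
    linear_combination this

lemma ram_inner_sum (r q q' k k' : ℕ) (hr : 0 < r) (hq : q ∣ r) (hq' : q' ∣ r)
    (hq0 : 0 < q) (hq'0 : 0 < q') (hkq : Nat.gcd k q = 1) (hk'q' : Nat.gcd k' q' = 1) :
    ∑ a ∈ Finset.Icc 1 r, rse ((k : ℂ) * a / q) * rse ((k' : ℂ) * a / q') =
      if (q = q' ∧ q ∣ (k + k')) then (r : ℂ) else 0 := by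
  have hqc : (q : ℂ) ≠ 0 := Nat.cast_ne_zero.mpr hq0.ne'
  have hq'c : (q' : ℂ) ≠ 0 := Nat.cast_ne_zero.mpr hq'0.ne'
  set z : ℂ := rse ((k : ℂ)/q + (k' : ℂ)/q') with hz
  have hterm : ∀ a : ℕ, rse ((k : ℂ) * a / q) * rse ((k' : ℂ) * a / q') = z ^ a := by
    intro a
    rw [hz, rse_pow, show (a : ℂ) * ((k : ℂ)/q + (k' : ℂ)/q')
      = (k : ℂ) * a / q + (k' : ℂ) * a / q' by ring, rse_add]
  have hzr : z ^ r = 1 := by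
    rw [hz, rse_pow]
    have e1 : (r : ℂ) * ((k : ℂ)/q + (k' : ℂ)/q') = ((r/q * k + r/q' * k' : ℕ) : ℂ) := by
      push_cast [Nat.cast_div hq hqc, Nat.cast_div hq' hq'c]
      field_simp
    rw [e1, rse_nat]
  rw [Finset.sum_congr rfl (fun a _ => hterm a), geom_icc z r hzr,
    if_congr (cond_iff q q' k k' hq0 hq'0 hkq hk'q') rfl rfl]

lemma ramanujan_orth (r q q' : ℕ) (hr : 0 < r) (hq : q ∣ r) (hq' : q' ∣ r) :
    ∑ a ∈ Finset.Icc 1 r, ramanujanSum a q * ramanujanSum a q' =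
      if q = q' then (r : ℂ) * (Nat.totient q : ℂ) else 0 := by
  have hq0 : 0 < q := Nat.pos_of_dvd_of_pos hq hr
  have hq'0 : 0 < q' := Nat.pos_of_dvd_of_pos hq' hr
  have step1 : ∑ a ∈ Finset.Icc 1 r, ramanujanSum a q * ramanujanSum a q' =
      ∑ k ∈ (Finset.Icc 1 q).filter (fun k => Nat.gcd k q = 1),
        ∑ k' ∈ (Finset.Icc 1 q').filter (fun k => Nat.gcd k q' = 1),
          ∑ a ∈ Finset.Icc 1 r, rse ((k : ℂ) * a / q) * rse ((k' : ℂ) * a / q') := by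
    rw [Finset.sum_congr rfl (fun a _ => by
      rw [ramanujanSum_def' a q, ramanujanSum_def' a q', Finset.sum_mul_sum])]
    rw [Finset.sum_comm]
    refine Finset.sum_congr rfl fun k hk => ?_
    rw [Finset.sum_comm]
  rw [step1]
  rw [Finset.sum_congr rfl (fun k hk => Finset.sum_congr rfl (fun k' hk' =>
    ram_inner_sum r q q' k k' hr hq hq' hq0 hq'0
      (Finset.mem_filter.mp hk).2 (Finset.mem_filter.mp hk').2))]
  by_cases hqq : q = q'
  · subst hqq
    simp only [true_and, if_pos rfl]
    have hrow : ∀ k ∈ (Finset.Icc 1 q).filter (fun k => Nat.gcd k q = 1),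
        ∑ k' ∈ (Finset.Icc 1 q).filter (fun k => Nat.gcd k q = 1),
          (if q ∣ (k + k') then (r : ℂ) else 0) = (r : ℂ) := by
      intro k hk
      rw [← Finset.sum_filter, Finset.sum_const, unique_partner q hq0 k hk, one_smul]
    rw [Finset.sum_congr rfl hrow, Finset.sum_const, totient_card q hq0,
      nsmul_eq_mul, mul_comm, if_pos trivial]
  · simp only [hqq, false_and, if_false, Finset.sum_const_zero]

lemma sum_gcd_eq (r : ℕ) (hr : 0 < r) (F : ℕ → ℂ) :
    ∑ a ∈ Finset.Icc 1 r, F (Nat.gcd a r) =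
    ∑ e ∈ r.divisors, (Nat.totient e : ℂ) * F (r / e) := by
  rw [part_sum r hr (fun k => F (Nat.gcd k r))]
  have step : ∀ d ∈ r.divisors,
      (∑ j ∈ (Finset.Icc 1 (r / d)).filter (fun j => Nat.gcd j (r / d) = 1),
        F (Nat.gcd (j * d) r)) = (Nat.totient (r / d) : ℂ) * F d := by
    intro d hd
    rw [Nat.mem_divisors] at hd
    have hd0 : 0 < d := Nat.pos_of_dvd_of_pos hd.1 hr
    have hrd0 : 0 < r / d := Nat.div_pos (Nat.le_of_dvd hr hd.1) hd0
    have hterm : ∀ j ∈ (Finset.Icc 1 (r / d)).filter (fun j => Nat.gcd j (r / d) = 1),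
        F (Nat.gcd (j * d) r) = F d := by
      intro j hj
      simp only [Finset.mem_filter, Finset.mem_Icc] at hj
      have hg : Nat.gcd (j * d) r = d := by
        conv_lhs => rw [← Nat.div_mul_cancel hd.1]
        rw [mul_comm j d, mul_comm (r / d) d, Nat.gcd_mul_left, hj.2, mul_one]
      rw [hg]
    rw [Finset.sum_congr rfl hterm, Finset.sum_const, totient_card (r / d) hrd0,
      nsmul_eq_mul]
  rw [Finset.sum_congr rfl step]
  rw [← Nat.sum_div_divisors r (fun e => (Nat.totient e : ℂ) * F (r / e))]
  refine Finset.sum_congr rfl fun d hd => ?_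
  rw [Nat.mem_divisors] at hd
  rw [Nat.div_div_self hd.1 hd.2]

lemma ramanujan_gcd_r (a r q : ℕ) (hq : q ∣ r) (hq0 : 0 < q) :
    ramanujanSum a q = ramanujanSum (Nat.gcd a r) q := by
  rw [ramanujan_gcd a q hq0, ramanujan_gcd (Nat.gcd a r) q hq0]
  congr 1
  rw [Nat.gcd_assoc]
  congr 1
  exact (Nat.gcd_eq_right hq).symm

lemma dual_orth (r : ℕ) (hr : 0 < r) {e e' : ℕ} (he : e ∈ r.divisors) (he' : e' ∈ r.divisors) :
    ∑ q ∈ r.divisors,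
      (Nat.totient e : ℂ) * ramanujanSum (r / e) q * ramanujanSum (r / e') q /
        ((r : ℂ) * (Nat.totient q : ℂ)) = if e = e' then 1 else 0 := by
  classical
  set ι := {x : ℕ // x ∈ r.divisors}
  set A : Matrix ι ι ℂ := Matrix.of fun q e : ι => ramanujanSum (r / (e : ℕ)) q with hA
  set B : Matrix ι ι ℂ := Matrix.of
    (fun e q : ι => (Nat.totient (e : ℕ) : ℂ) * ramanujanSum (r / (e : ℕ)) q /
      ((r : ℂ) * (Nat.totient (q : ℕ) : ℂ))) with hB
  have hAB : A * B = 1 := by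
    ext q q'
    rw [Matrix.mul_apply, Matrix.one_apply]
    have hq'0 : 0 < (q' : ℕ) := Nat.pos_of_mem_divisors q'.2
    have hden : ((r : ℂ) * (Nat.totient (q' : ℕ) : ℂ)) ≠ 0 :=
      mul_ne_zero (Nat.cast_ne_zero.mpr hr.ne')
        (Nat.cast_ne_zero.mpr (Nat.totient_pos.mpr hq'0).ne')
    have h1 : ∀ u : ι, A q u * B u q' =
        (Nat.totient (u : ℕ) : ℂ) *
          (ramanujanSum (r / (u : ℕ)) q * ramanujanSum (r / (u : ℕ)) q') /
          ((r : ℂ) * (Nat.totient (q' : ℕ) : ℂ)) := by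
      intro u; simp only [hA, hB, Matrix.of_apply]; ring
    rw [Finset.sum_congr rfl (fun u _ => h1 u), ← Finset.sum_div]
    have h2 : (∑ u : ι, (Nat.totient (u : ℕ) : ℂ) *
        (ramanujanSum (r / (u : ℕ)) q * ramanujanSum (r / (u : ℕ)) q')) =
        if (q : ℕ) = (q' : ℕ) then (r : ℂ) * (Nat.totient (q : ℕ) : ℂ) else 0 := by
      rw [Finset.sum_coe_sort r.divisors (fun u =>
        (Nat.totient u : ℂ) * (ramanujanSum (r / u) q * ramanujanSum (r / u) q'))]
      rw [← sum_gcd_eq r hr (fun a => ramanujanSum a q * ramanujanSum a q')]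
      have hq0 : 0 < (q : ℕ) := Nat.pos_of_mem_divisors q.2
      have hqdvd : (q : ℕ) ∣ r := (Nat.mem_divisors.mp q.2).1
      have hq'dvd : (q' : ℕ) ∣ r := (Nat.mem_divisors.mp q'.2).1
      have h3 : ∀ a ∈ Finset.Icc 1 r,
          ramanujanSum (Nat.gcd a r) q * ramanujanSum (Nat.gcd a r) q' =
          ramanujanSum a q * ramanujanSum a q' := by
        intro a ha
        rw [← ramanujan_gcd_r a r q hqdvd hq0, ← ramanujan_gcd_r a r q' hq'dvd hq'0]
      rw [Finset.sum_congr rfl h3]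
      exact ramanujan_orth r q q' hr hqdvd hq'dvd
    rw [h2]
    by_cases hqq : (q : ℕ) = (q' : ℕ)
    · have : q = q' := Subtype.ext hqq
      rw [if_pos hqq, if_pos this, hqq, div_self hden]
    · have : ¬ q = q' := fun h => hqq (congrArg _ h)
      rw [if_neg hqq, if_neg this, zero_div]
  have hBA : B * A = 1 := mul_eq_one_comm.mp hAB
  have key := congrFun (congrFun hBA ⟨e, he⟩) ⟨e', he'⟩
  rw [Matrix.mul_apply, Matrix.one_apply] at key
  have h4 : ∀ q : ι, B ⟨e, he⟩ q * A q ⟨e', he'⟩ =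
      (Nat.totient e : ℂ) * ramanujanSum (r / e) q * ramanujanSum (r / e') q /
        ((r : ℂ) * (Nat.totient (q : ℕ) : ℂ)) := by
    intro q; simp only [hA, hB, Matrix.of_apply]; ring
  rw [Finset.sum_congr rfl (fun q _ => h4 q)] at key
  rw [Finset.sum_coe_sort r.divisors (fun q =>
    (Nat.totient e : ℂ) * ramanujanSum (r / e) q * ramanujanSum (r / e') q /
      ((r : ℂ) * (Nat.totient q : ℂ)))] at key
  rw [key]
  by_cases hee : e = e'
  · rw [if_pos hee, if_pos (Subtype.ext hee)]
  · rw [if_neg hee, if_neg (fun h => hee (congrArg Subtype.val h))]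

/-- Every `r`-even function `f` has the Ramanujan–Fourier expansion
`f(n) = ∑_{q ∣ r} h(q) c(n,q)` with
`h(q) = (1/(r φ(q))) ∑_{e ∣ r} φ(e) f(r/e) c(r/e, q)`. -/
theorem even_fourier_expansion (r : ℕ) (hr : 0 < r) (f : ℕ → ℂ)
    (hf : ∀ n : ℕ, 0 < n → f n = f (Nat.gcd n r)) :
    ∀ n : ℕ, 0 < n →
      f n = ∑ q ∈ r.divisors,
        ((1 / ((r : ℂ) * (Nat.totient q : ℂ))) *
          ∑ e ∈ r.divisors, (Nat.totient e : ℂ) * f (r / e) * ramanujanSum (r / e) q) *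
          ramanujanSum n q := by
  intro n hn
  set d := Nat.gcd n r with hd
  have hdvd : d ∣ r := Nat.gcd_dvd_right n r
  have hd0 : 0 < d := Nat.gcd_pos_of_pos_right n hr
  set e0 := r / d with he0def
  have he0 : e0 ∈ r.divisors := Nat.mem_divisors.mpr ⟨Nat.div_dvd_of_dvd hdvd, hr.ne'⟩
  have hre0 : r / e0 = d := Nat.div_div_self hdvd hr.ne'
  have hfn : f n = f d := hf n hn
  have hcq : ∀ q ∈ r.divisors, ramanujanSum n q = ramanujanSum (r / e0) q := by
    intro q hq
    rw [hre0, hd]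
    exact ramanujan_gcd_r n r q (Nat.mem_divisors.mp hq).1 (Nat.pos_of_mem_divisors hq)
  symm
  calc ∑ q ∈ r.divisors,
        ((1 / ((r : ℂ) * (Nat.totient q : ℂ))) *
          ∑ e ∈ r.divisors, (Nat.totient e : ℂ) * f (r / e) * ramanujanSum (r / e) q) *
          ramanujanSum n q
      = ∑ q ∈ r.divisors, ∑ e ∈ r.divisors,
          ((1 / ((r : ℂ) * (Nat.totient q : ℂ))) *
            ((Nat.totient e : ℂ) * f (r / e) * ramanujanSum (r / e) q)) *
            ramanujanSum (r / e0) q := by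
        refine Finset.sum_congr rfl fun q hq => ?_
        rw [hcq q hq, Finset.mul_sum, Finset.sum_mul]
    _ = ∑ e ∈ r.divisors, ∑ q ∈ r.divisors,
          ((1 / ((r : ℂ) * (Nat.totient q : ℂ))) *
            ((Nat.totient e : ℂ) * f (r / e) * ramanujanSum (r / e) q)) *
            ramanujanSum (r / e0) q := Finset.sum_comm
    _ = ∑ e ∈ r.divisors, f (r / e) *
          ∑ q ∈ r.divisors,
            (Nat.totient e : ℂ) * ramanujanSum (r / e) q * ramanujanSum (r / e0) q /
              ((r : ℂ) * (Nat.totient q : ℂ)) := by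
        refine Finset.sum_congr rfl fun e he => ?_
        rw [Finset.mul_sum]
        refine Finset.sum_congr rfl fun q hq => ?_
        ring
    _ = ∑ e ∈ r.divisors, f (r / e) * (if e = e0 then (1 : ℂ) else 0) := by
        refine Finset.sum_congr rfl fun e he => ?_
        rw [dual_orth r hr he he0]
    _ = f (r / e0) := by
        rw [Finset.sum_congr rfl (fun e _ => by rw [mul_ite, mul_one, mul_zero]),
          Finset.sum_ite_eq' r.divisors e0 (fun e => f (r / e)), if_pos he0]
    _ = f n := by rw [hre0, ← hfn]
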